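/- arXiv:0909.3997 — 3 statements merged into one kernel-verified Lean document; each statement's English description precedes it below -/
import Mathlib

section
/- For any two tiling systems τ₁ and τ₂ in dimension 2, there exists a tiling system τ in dimension 2 such that the set of horizontal eigenperiods of valid tilings of τ equals the union of the set of horizontal eigenperiods of valid tilings of τ₁ and the set of horizontal eigenperiods of valid tilings of τ₂. -/
/-- A tiling system in dimension 2: a finite set of tiles `T` together with a
finite family of forbidden patterns, each given by a finite neighborhood
`nbhd i ⊆ ℤ²` and a pattern `pat i : ℤ² → T`. -/
structure TilingSystem2 where
  T : Type
  fintypeT : Fintype T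
  ι : Type
  fintypeι : Fintype ι
  nbhd : ι → Finset (ℤ × ℤ)
  pat : ι → ℤ × ℤ → T

/-- A tiling `c : ℤ² → T` is valid if no translate of a forbidden pattern appears in it. -/
def TilingSystem2.IsValid (τ : TilingSystem2) (c : ℤ × ℤ → τ.T) : Prop :=
  ∀ v : ℤ × ℤ, ∀ i : τ.ι, ¬ (∀ u ∈ τ.nbhd i, c (v + u) = τ.pat i u)

/-- `q` is a horizontal period of `c`: `q > 0` and `c (x + q, y) = c (x, y)` for all `x, y`. -/
def TilingSystem2.IsHorizPeriod (τ : TilingSystem2) (c : ℤ × ℤ → τ.T) (q : ℕ) : Prop :=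
  0 < q ∧ ∀ x y : ℤ, c (x + (q : ℤ), y) = c (x, y)

/-- `q` is the horizontal eigenperiod of `c`: the smallest horizontal period of `c`. -/
def TilingSystem2.IsHorizEigenperiod (τ : TilingSystem2) (c : ℤ × ℤ → τ.T) (q : ℕ) : Prop :=
  τ.IsHorizPeriod c q ∧ ∀ q' : ℕ, τ.IsHorizPeriod c q' → q ≤ q'

/-- `L_h(τ)`: the set of horizontal eigenperiods of valid tilings of `τ`. -/
def TilingSystem2.Lh (τ : TilingSystem2) : Set ℕ :=
  { q | ∃ c : ℤ × ℤ → τ.T, τ.IsValid c ∧ τ.IsHorizEigenperiod c q }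

/- ## Auxiliary construction: the disjoint-union tiling system -/

open Sum Finset

/-- Disjoint union of two tiling systems. Tiles are the disjoint union of tiles;
forbidden patterns are: the patterns of `τ₁` (rooted at the origin, tagged with an
arbitrary tile at the origin if the origin is not in the neighborhood), the same for
`τ₂`, and "mixing" patterns forbidding horizontally or vertically adjacent tiles from
different sides. -/
noncomputable def TSsum (τ₁ τ₂ : TilingSystem2) : TilingSystem2 where
  T := τ₁.T ⊕ τ₂.T
  fintypeT := @instFintypeSum _ _ τ₁.fintypeT τ₂.fintypeT
  ι := (τ₁.ι × τ₁.T) ⊕ ((τ₂.ι × τ₂.T) ⊕ ((τ₁.T × τ₂.T) × Bool × Bool))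
  fintypeι := by
    haveI := τ₁.fintypeT; haveI := τ₂.fintypeT
    haveI := τ₁.fintypeι; haveI := τ₂.fintypeι
    infer_instance
  nbhd := fun i =>
    match i with
    | .inl (j, _) => insert (0, 0) (τ₁.nbhd j)
    | .inr (.inl (j, _)) => insert (0, 0) (τ₂.nbhd j)
    | .inr (.inr (_, d, _)) =>
        {((0 : ℤ), (0 : ℤ)), (if d then ((1 : ℤ), (0 : ℤ)) else ((0 : ℤ), (1 : ℤ)))}
  pat := fun i u =>
    match i with
    | .inl (j, t) => Sum.inl (if u = (0, 0) ∧ (0, 0) ∉ τ₁.nbhd j then t else τ₁.pat j u)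
    | .inr (.inl (j, t)) => Sum.inr (if u = (0, 0) ∧ (0, 0) ∉ τ₂.nbhd j then t else τ₂.pat j u)
    | .inr (.inr ((a, b), _, o)) =>
        if o then (if u = (0, 0) then Sum.inl a else Sum.inr b)
        else (if u = (0, 0) then Sum.inr b else Sum.inl a)

lemma add_origin (v : ℤ × ℤ) : v + ((0 : ℤ), (0 : ℤ)) = v := by
  ext <;> simp

/-- Transfer of validity for left-side tilings. -/
lemma valid_inl_iff (τ₁ τ₂ : TilingSystem2) (c₁ : ℤ × ℤ → τ₁.T) :
    (TSsum τ₁ τ₂).IsValid (fun v => Sum.inl (c₁ v)) ↔ τ₁.IsValid c₁ := by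
  constructor
  · intro h v j hm
    apply h v (.inl (j, c₁ v))
    intro u hu
    rcases Finset.mem_insert.1 hu with h0 | hmem
    · subst h0
      simp only [TSsum]
      split_ifs with hcond
      · rw [add_origin]
      · have h00 : ((0 : ℤ), (0 : ℤ)) ∈ τ₁.nbhd j := by
          by_contra hn; exact hcond ⟨by trivial, hn⟩
        exact congrArg Sum.inl (hm _ h00)
    · have hcond : ¬(u = ((0 : ℤ), (0 : ℤ)) ∧ ((0 : ℤ), (0 : ℤ)) ∉ τ₁.nbhd j) := by
        rintro ⟨rfl, hn⟩; exact hn hmem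
      simp only [TSsum, if_neg hcond]
      exact congrArg Sum.inl (hm _ hmem)
  · intro h1 v i hm
    match i with
    | .inl (j, t) =>
      apply h1 v j
      intro u hu
      have := hm u (Finset.mem_insert_of_mem hu)
      have hcond : ¬(u = ((0 : ℤ), (0 : ℤ)) ∧ ((0 : ℤ), (0 : ℤ)) ∉ τ₁.nbhd j) := by
        rintro ⟨rfl, hn⟩; exact hn hu
      simp only [TSsum, if_neg hcond] at this
      exact Sum.inl_injective this
    | .inr (.inl (j, t)) =>
      have := hm ((0 : ℤ), (0 : ℤ)) (Finset.mem_insert_self _ _)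
      simp only [TSsum] at this
      exact absurd this (by simp)
    | .inr (.inr ((a, b), d, o)) =>
      cases o with
      | false =>
        have := hm ((0 : ℤ), (0 : ℤ)) (Finset.mem_insert_self _ _)
        simp only [TSsum, if_neg (Bool.false_ne_true), if_pos rfl] at this
        exact absurd this (by simp)
      | true =>
        have he : (if d then ((1 : ℤ), (0 : ℤ)) else ((0 : ℤ), (1 : ℤ))) ∈
            ({((0 : ℤ), (0 : ℤ)), (if d then ((1 : ℤ), (0 : ℤ)) else ((0 : ℤ), (1 : ℤ)))} :
              Finset (ℤ × ℤ)) := by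
          simp
        have hne : (if d then ((1 : ℤ), (0 : ℤ)) else ((0 : ℤ), (1 : ℤ))) ≠
            ((0 : ℤ), (0 : ℤ)) := by cases d <;> simp
        have := hm _ he
        simp only [TSsum, if_pos rfl, if_neg hne] at this
        exact absurd this (by simp)

/-- Transfer of validity for right-side tilings. -/
lemma valid_inr_iff (τ₁ τ₂ : TilingSystem2) (c₂ : ℤ × ℤ → τ₂.T) :
    (TSsum τ₁ τ₂).IsValid (fun v => Sum.inr (c₂ v)) ↔ τ₂.IsValid c₂ := by
  constructor
  · intro h v j hm
    apply h v (.inr (.inl (j, c₂ v)))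
    intro u hu
    rcases Finset.mem_insert.1 hu with h0 | hmem
    · subst h0
      simp only [TSsum]
      split_ifs with hcond
      · rw [add_origin]
      · have h00 : ((0 : ℤ), (0 : ℤ)) ∈ τ₂.nbhd j := by
          by_contra hn; exact hcond ⟨by trivial, hn⟩
        exact congrArg Sum.inr (hm _ h00)
    · have hcond : ¬(u = ((0 : ℤ), (0 : ℤ)) ∧ ((0 : ℤ), (0 : ℤ)) ∉ τ₂.nbhd j) := by
        rintro ⟨rfl, hn⟩; exact hn hmem
      simp only [TSsum, if_neg hcond]
      exact congrArg Sum.inr (hm _ hmem)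
  · intro h2 v i hm
    match i with
    | .inl (j, t) =>
      have := hm ((0 : ℤ), (0 : ℤ)) (Finset.mem_insert_self _ _)
      simp only [TSsum] at this
      exact absurd this (by simp)
    | .inr (.inl (j, t)) =>
      apply h2 v j
      intro u hu
      have := hm u (Finset.mem_insert_of_mem hu)
      have hcond : ¬(u = ((0 : ℤ), (0 : ℤ)) ∧ ((0 : ℤ), (0 : ℤ)) ∉ τ₂.nbhd j) := by
        rintro ⟨rfl, hn⟩; exact hn hu
      simp only [TSsum, if_neg hcond] at this
      exact Sum.inr_injective this
    | .inr (.inr ((a, b), d, o)) =>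
      cases o with
      | true =>
        have := hm ((0 : ℤ), (0 : ℤ)) (Finset.mem_insert_self _ _)
        simp only [TSsum, if_pos rfl] at this
        exact absurd this (by simp)
      | false =>
        have he : (if d then ((1 : ℤ), (0 : ℤ)) else ((0 : ℤ), (1 : ℤ))) ∈
            ({((0 : ℤ), (0 : ℤ)), (if d then ((1 : ℤ), (0 : ℤ)) else ((0 : ℤ), (1 : ℤ)))} :
              Finset (ℤ × ℤ)) := by
          simp
        have hne : (if d then ((1 : ℤ), (0 : ℤ)) else ((0 : ℤ), (1 : ℤ))) ≠
            ((0 : ℤ), (0 : ℤ)) := by cases d <;> simp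
        have := hm _ he
        simp only [TSsum, if_neg (Bool.false_ne_true), if_neg hne] at this
        exact absurd this (by simp)

/-- In a valid tiling of the union system, adjacent cells lie on the same side. -/
lemma side_step (τ₁ τ₂ : TilingSystem2) (c : ℤ × ℤ → (TSsum τ₁ τ₂).T)
    (hc : (TSsum τ₁ τ₂).IsValid c) (v : ℤ × ℤ) (d : Bool) :
    (c (v + (if d then ((1 : ℤ), (0 : ℤ)) else ((0 : ℤ), (1 : ℤ))))).isLeft = (c v).isLeft := by
  set e := (if d then ((1 : ℤ), (0 : ℤ)) else ((0 : ℤ), (1 : ℤ))) with he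
  have hne : e ≠ ((0 : ℤ), (0 : ℤ)) := by cases d <;> simp [he]
  have hne' : e ≠ (0 : ℤ × ℤ) := by cases d <;> simp [he, Prod.ext_iff]
  cases h1 : c v with
  | inl a =>
    cases h2 : c (v + e) with
    | inl a' => simp
    | inr b =>
      exfalso
      apply hc v (.inr (.inr ((a, b), d, true)))
      intro u hu
      rcases Finset.mem_insert.1 hu with h0 | hmem
      · subst h0
        rw [add_origin, h1]
        simp [TSsum]
      · rw [Finset.mem_singleton] at hmem
        subst hmem
        rw [h2]
        simp [TSsum, hne, hne'] <;> cases d <;> simp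
  | inr b =>
    cases h2 : c (v + e) with
    | inr b' => simp
    | inl a =>
      exfalso
      apply hc v (.inr (.inr ((a, b), d, false)))
      intro u hu
      rcases Finset.mem_insert.1 hu with h0 | hmem
      · subst h0
        rw [add_origin, h1]
        simp [TSsum]
      · rw [Finset.mem_singleton] at hmem
        subst hmem
        rw [h2]
        simp [TSsum, hne, hne'] <;> cases d <;> simp

/-- In a valid tiling of the union system, all cells lie on the same side. -/
lemma side_const (τ₁ τ₂ : TilingSystem2) (c : ℤ × ℤ → (TSsum τ₁ τ₂).T)
    (hc : (TSsum τ₁ τ₂).IsValid c) (v : ℤ × ℤ) :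
    (c v).isLeft = (c ((0 : ℤ), (0 : ℤ))).isLeft := by
  have hstepx : ∀ x y : ℤ, (c (x + 1, y)).isLeft = (c (x, y)).isLeft := by
    intro x y
    have := side_step τ₁ τ₂ c hc (x, y) true
    simpa using this
  have hstepy : ∀ x y : ℤ, (c (x, y + 1)).isLeft = (c (x, y)).isLeft := by
    intro x y
    have := side_step τ₁ τ₂ c hc (x, y) false
    simpa using this
  have hx : ∀ x y : ℤ, (c (x, y)).isLeft = (c (0, y)).isLeft := by
    intro x y
    induction x using Int.induction_on with
    | zero => rfl
    | succ k ih => rw [← ih]; exact_mod_cast hstepx k y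
    | pred k ih =>
      rw [← ih]
      have := hstepx (-(k : ℤ) - 1) y
      rw [show (-(k : ℤ) - 1 + 1) = -(k : ℤ) by ring] at this
      exact this.symm
  have hy : ∀ y : ℤ, (c ((0 : ℤ), y)).isLeft = (c ((0 : ℤ), (0 : ℤ))).isLeft := by
    intro y
    induction y using Int.induction_on with
    | zero => rfl
    | succ k ih => rw [← ih]; exact_mod_cast hstepy 0 k
    | pred k ih =>
      rw [← ih]
      have := hstepy 0 (-(k : ℤ) - 1)
      rw [show (-(k : ℤ) - 1 + 1) = -(k : ℤ) by ring] at this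
      exact this.symm
  calc (c v).isLeft = (c (v.1, v.2)).isLeft := by rfl
    _ = (c (0, v.2)).isLeft := hx v.1 v.2
    _ = _ := hy v.2

/-- The class `𝓗` of sets of horizontal eigenperiods is closed under union. -/
theorem Lh_closed_under_union (τ₁ τ₂ : TilingSystem2) :
    ∃ τ : TilingSystem2, τ.Lh = τ₁.Lh ∪ τ₂.Lh := by
  classical
  refine ⟨TSsum τ₁ τ₂, ?_⟩
  ext q
  simp only [Set.mem_union]
  constructor
  · rintro ⟨c, hval, hper, hmin⟩
    cases hside : (c ((0 : ℤ), (0 : ℤ))).isLeft with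
    | true =>
      -- left side
      have hall : ∀ v : ℤ × ℤ, ∃ a, c v = Sum.inl a := by
        intro v
        have := side_const τ₁ τ₂ c hval v
        rw [hside] at this
        exact Sum.isLeft_iff.1 this
      choose c₁ hc₁ using hall
      have hceq : c = fun v => Sum.inl (c₁ v) := funext hc₁
      left
      refine ⟨c₁, ?_, ?_, ?_⟩
      · rw [← valid_inl_iff τ₁ τ₂ c₁, ← hceq]; exact hval
      · refine ⟨hper.1, fun x y => ?_⟩
        have := hper.2 x y
        rw [hc₁, hc₁] at this
        exact Sum.inl_injective this
      · intro q' hq'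
        apply hmin
        refine ⟨hq'.1, fun x y => ?_⟩
        rw [hc₁, hc₁, hq'.2 x y]
    | false =>
      have hall : ∀ v : ℤ × ℤ, ∃ b, c v = Sum.inr b := by
        intro v
        have := side_const τ₁ τ₂ c hval v
        rw [hside] at this
        exact Sum.isRight_iff.1 (by cases h : c v <;> simp_all)
      choose c₂ hc₂ using hall
      have hceq : c = fun v => Sum.inr (c₂ v) := funext hc₂
      right
      refine ⟨c₂, ?_, ?_, ?_⟩
      · rw [← valid_inr_iff τ₁ τ₂ c₂, ← hceq]; exact hval
      · refine ⟨hper.1, fun x y => ?_⟩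
        have := hper.2 x y
        rw [hc₂, hc₂] at this
        exact Sum.inr_injective this
      · intro q' hq'
        apply hmin
        refine ⟨hq'.1, fun x y => ?_⟩
        rw [hc₂, hc₂, hq'.2 x y]
  · rintro (⟨c₁, hval, hper, hmin⟩ | ⟨c₂, hval, hper, hmin⟩)
    · refine ⟨fun v => Sum.inl (c₁ v), (valid_inl_iff τ₁ τ₂ c₁).2 hval, ⟨hper.1, fun x y => ?_⟩,
        fun q' hq' => hmin q' ⟨hq'.1, fun x y => Sum.inl_injective (hq'.2 x y)⟩⟩
      exact congrArg Sum.inl (hper.2 x y)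
    · refine ⟨fun v => Sum.inr (c₂ v), (valid_inr_iff τ₁ τ₂ c₂).2 hval, ⟨hper.1, fun x y => ?_⟩,
        fun q' hq' => hmin q' ⟨hq'.1, fun x y => Sum.inr_injective (hq'.2 x y)⟩⟩
      exact congrArg Sum.inr (hper.2 x y)
end

section
/- For any dimension d ≥ 1 and any two tiling systems τ₁ and τ₂ in dimension d, there exists a tiling system τ in dimension d such that the set of eigenperiods of valid tilings of τ equals the union of the set of eigenperiods of valid tilings of τ₁ and the set of eigenperiods of valid tilings of τ₂. -/
/-- A tiling system in dimension `d`: a finite set of tiles `T` together with a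
finite family of forbidden patterns, each given by a finite neighborhood
`nbhd i ⊆ ℤ^d` and a pattern `pat i : ℤ^d → T`. -/
structure TilingSystem (d : ℕ) where
  T : Type
  fintypeT : Fintype T
  ι : Type
  fintypeι : Fintype ι
  nbhd : ι → Finset (Fin d → ℤ)
  pat : ι → (Fin d → ℤ) → T

/-- A tiling `c : ℤ^d → T` is valid if no translate of a forbidden pattern appears in it. -/
def TilingSystem.IsValid {d : ℕ} (τ : TilingSystem d) (c : (Fin d → ℤ) → τ.T) : Prop :=
  ∀ v : Fin d → ℤ, ∀ i : τ.ι, ¬ (∀ u ∈ τ.nbhd i, c (v + u) = τ.pat i u)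

/-- `q` is a (total) period of `c`: `q > 0` and `c` is invariant under translation by
`q · e_i` for every standard basis vector `e_i` of `ℤ^d`. -/
def TilingSystem.IsPeriod {d : ℕ} (τ : TilingSystem d) (c : (Fin d → ℤ) → τ.T) (q : ℕ) : Prop :=
  0 < q ∧ ∀ v : Fin d → ℤ, ∀ i : Fin d,
    c (v + fun j => if j = i then (q : ℤ) else 0) = c v

/-- `q` is the eigenperiod of `c`: the smallest (total) period of `c`. -/
def TilingSystem.IsEigenperiod {d : ℕ} (τ : TilingSystem d) (c : (Fin d → ℤ) → τ.T) (q : ℕ) : Prop :=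
  τ.IsPeriod c q ∧ ∀ q' : ℕ, τ.IsPeriod c q' → q ≤ q'

/-- `L_t(τ)`: the set of eigenperiods of valid tilings of `τ`. -/
def TilingSystem.Lt {d : ℕ} (τ : TilingSystem d) : Set ℕ :=
  { q | ∃ c : (Fin d → ℤ) → τ.T, τ.IsValid c ∧ τ.IsEigenperiod c q }

namespace TilingUnion

/-- The standard basis vector `e_i`. -/
def evec {d : ℕ} (i : Fin d) : Fin d → ℤ := fun j => if j = i then 1 else 0

lemma evec_ne_zero {d : ℕ} (i : Fin d) : evec i ≠ 0 := by
  intro h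
  have := congrFun h i
  simp [evec] at this

lemma trans_smul {d : ℕ} (P : (Fin d → ℤ) → Prop)
    (h : ∀ v i, P v ↔ P (v + evec i)) (k : ℤ) (i : Fin d) :
    ∀ w, P (w + k • evec i) ↔ P w := by
  induction k using Int.induction_on with
  | zero => intro w; simp
  | succ k ih =>
      intro w
      have e : w + ((k : ℤ) + 1) • evec i = (w + (k : ℤ) • evec i) + evec i := by
        rw [add_smul, one_smul]; abel
      rw [e, ← h (w + (k : ℤ) • evec i) i]
      exact ih w
  | pred k ih =>
      intro w
      have e : (w + (-(k : ℤ) - 1) • evec i) + evec i = w + (-(k : ℤ)) • evec i := by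
        rw [sub_smul, one_smul]; abel
      have h' := h (w + (-(k : ℤ) - 1) • evec i) i
      rw [e] at h'
      rw [h']
      exact ih w

lemma connected {d : ℕ} (P : (Fin d → ℤ) → Prop)
    (h : ∀ v i, P v ↔ P (v + evec i)) (v : Fin d → ℤ) : P v ↔ P 0 := by
  have C : ∀ n : ℕ, ∀ w : Fin d → ℤ, (∀ j : Fin d, n ≤ (j : ℕ) → w j = 0) → (P w ↔ P 0) := by
    intro n
    induction n with
    | zero =>
        intro w hw
        have hw0 : w = 0 := funext fun j => hw j (Nat.zero_le _)
        rw [hw0]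
    | succ n ih =>
        intro w hw
        by_cases hn : n < d
        · set i : Fin d := ⟨n, hn⟩ with hi
          have h1 : P (w + (-(w i)) • evec i) ↔ P w := trans_smul P h (-(w i)) i w
          have h2 : P (w + (-(w i)) • evec i) ↔ P 0 := by
            apply ih
            intro j hj
            rcases eq_or_lt_of_le hj with hj' | hj'
            · have hji : j = i := by
                apply Fin.ext
                simp only [hi]
                omega
              simp [hji, evec]
            · have hji : j ≠ i := by
                intro hcon
                rw [hcon] at hj'
                simp [hi] at hj'
              have : w j = 0 := hw j hj'
              simp [evec, hji, this]
          rw [← h1, h2]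
        · apply ih
          intro j hj
          exact absurd (lt_of_lt_of_le j.isLt (not_lt.mp hn)) (not_lt.mpr hj)
  exact C d v (fun j hj => absurd j.isLt (not_lt.mpr hj))

lemma isPeriod_comp {d : ℕ} (τ τ' : TilingSystem d) (f : τ.T → τ'.T)
    (hf : Function.Injective f) (c : (Fin d → ℤ) → τ.T) (q : ℕ) :
    τ'.IsPeriod (f ∘ c) q ↔ τ.IsPeriod c q := by
  unfold TilingSystem.IsPeriod
  simp [Function.comp, hf.eq_iff]

lemma isEigen_comp {d : ℕ} (τ τ' : TilingSystem d) (f : τ.T → τ'.T)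
    (hf : Function.Injective f) (c : (Fin d → ℤ) → τ.T) (q : ℕ) :
    τ'.IsEigenperiod (f ∘ c) q ↔ τ.IsEigenperiod c q := by
  unfold TilingSystem.IsEigenperiod
  simp only [isPeriod_comp τ τ' f hf c]

lemma Lt_eq_empty {d : ℕ} (τ : TilingSystem d) (h : ∃ i, τ.nbhd i = ∅) : τ.Lt = ∅ := by
  ext q
  simp only [TilingSystem.Lt, Set.mem_setOf_eq, Set.mem_empty_iff_false, iff_false]
  rintro ⟨c, hc, -⟩
  obtain ⟨i, hi⟩ := h
  exact hc 0 i (by simp [hi])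

/-- The disjoint union of two tiling systems, with mixed adjacent pairs forbidden. -/
def union {d : ℕ} (τ₁ τ₂ : TilingSystem d) : TilingSystem d where
  T := τ₁.T ⊕ τ₂.T
  fintypeT := by letI := τ₁.fintypeT; letI := τ₂.fintypeT; infer_instance
  ι := τ₁.ι ⊕ τ₂.ι ⊕ (Fin d × τ₁.T × τ₂.T × Bool)
  fintypeι := by
    letI := τ₁.fintypeι; letI := τ₂.fintypeι
    letI := τ₁.fintypeT; letI := τ₂.fintypeT
    infer_instance
  nbhd := fun i => match i with
    | .inl i => τ₁.nbhd i
    | .inr (.inl i) => τ₂.nbhd i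
    | .inr (.inr (i, _, _, _)) => {0, evec i}
  pat := fun i => match i with
    | .inl i => fun u => Sum.inl (τ₁.pat i u)
    | .inr (.inl i) => fun u => Sum.inr (τ₂.pat i u)
    | .inr (.inr (i, t₁, t₂, true)) => fun u => if u = 0 then Sum.inl t₁ else Sum.inr t₂
    | .inr (.inr (i, t₁, t₂, false)) => fun u => if u = 0 then Sum.inr t₂ else Sum.inl t₁

variable {d : ℕ} {τ₁ τ₂ : TilingSystem d}

@[simp] lemma union_nbhd_inl (i : τ₁.ι) :
    (union τ₁ τ₂).nbhd (Sum.inl i) = τ₁.nbhd i := rfl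
@[simp] lemma union_nbhd_inr (i : τ₂.ι) :
    (union τ₁ τ₂).nbhd (Sum.inr (Sum.inl i)) = τ₂.nbhd i := rfl
@[simp] lemma union_nbhd_mix (i : Fin d) (t₁ : τ₁.T) (t₂ : τ₂.T) (b : Bool) :
    (union τ₁ τ₂).nbhd (Sum.inr (Sum.inr (i, t₁, t₂, b))) = {0, evec i} := rfl
@[simp] lemma union_pat_inl (i : τ₁.ι) (u : Fin d → ℤ) :
    (union τ₁ τ₂).pat (Sum.inl i) u = Sum.inl (τ₁.pat i u) := rfl
@[simp] lemma union_pat_inr (i : τ₂.ι) (u : Fin d → ℤ) :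
    (union τ₁ τ₂).pat (Sum.inr (Sum.inl i)) u = Sum.inr (τ₂.pat i u) := rfl
@[simp] lemma union_pat_mix_true (i : Fin d) (t₁ : τ₁.T) (t₂ : τ₂.T) (u : Fin d → ℤ) :
    (union τ₁ τ₂).pat (Sum.inr (Sum.inr (i, t₁, t₂, true))) u
      = if u = 0 then Sum.inl t₁ else Sum.inr t₂ := rfl
@[simp] lemma union_pat_mix_false (i : Fin d) (t₁ : τ₁.T) (t₂ : τ₂.T) (u : Fin d → ℤ) :
    (union τ₁ τ₂).pat (Sum.inr (Sum.inr (i, t₁, t₂, false))) u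
      = if u = 0 then Sum.inr t₂ else Sum.inl t₁ := rfl

lemma main {d : ℕ} (τ₁ τ₂ : TilingSystem d)
    (h1 : ∀ i, (τ₁.nbhd i).Nonempty) (h2 : ∀ i, (τ₂.nbhd i).Nonempty) :
    (union τ₁ τ₂).Lt = τ₁.Lt ∪ τ₂.Lt := by
  ext q
  simp only [TilingSystem.Lt, Set.mem_union, Set.mem_setOf_eq]
  constructor
  · rintro ⟨c, hc, he⟩
    -- all cells are on the same side
    have step : ∀ v i, ((c v).isLeft = true) ↔ ((c (v + evec i)).isLeft = true) := by
      intro v i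
      constructor
      · intro hv
        by_contra hcon
        obtain ⟨t₁, ht₁⟩ := Sum.isLeft_iff.mp hv
        cases h' : c (v + evec i) with
        | inl t => exact hcon (by simp [h'])
        | inr t₂ =>
          apply hc v (Sum.inr (Sum.inr (i, t₁, t₂, true)))
          intro u hu
          rcases Finset.mem_insert.mp hu with h0 | h0
          · subst h0; simpa using (show c v = Sum.inl t₁ from ht₁)
          · have hue : u = evec i := Finset.mem_singleton.mp h0
            subst hue
            simpa [evec_ne_zero i] using h'
      · intro hv
        by_contra hcon
        obtain ⟨t₁, ht₁⟩ := Sum.isLeft_iff.mp hv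
        cases h' : c v with
        | inl t => exact hcon (by simp [h'])
        | inr t₂ =>
          apply hc v (Sum.inr (Sum.inr (i, t₁, t₂, false)))
          intro u hu
          rcases Finset.mem_insert.mp hu with h0 | h0
          · subst h0; simpa using h'
          · have hue : u = evec i := Finset.mem_singleton.mp h0
            subst hue
            simpa [evec_ne_zero i] using (show c (v + evec i) = Sum.inl t₁ from ht₁)
    have same : ∀ v, ((c v).isLeft = true) ↔ ((c 0).isLeft = true) :=
      connected (fun w => (c w).isLeft = true) step
    cases h0 : c 0 with
    | inl t0 =>
        left
        have hl : ∀ v, ∃ t, c v = Sum.inl t := by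
          intro v
          have := (same v).mpr (by simp [h0])
          exact Sum.isLeft_iff.mp this
        choose c₁ hc₁ using hl
        have hcc : c = Sum.inl ∘ c₁ := funext fun v => hc₁ v
        refine ⟨c₁, ?_, ?_⟩
        · intro v i hm
          apply hc v (Sum.inl i)
          intro u hu
          rw [hc₁ (v + u)]
          show Sum.inl (c₁ (v + u)) = Sum.inl (τ₁.pat i u)
          rw [hm u hu]
        · rw [hcc] at he
          exact (isEigen_comp τ₁ (union τ₁ τ₂) Sum.inl Sum.inl_injective c₁ q).mp he
    | inr t0 =>
        right
        have hr : ∀ v, ∃ t, c v = Sum.inr t := by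
          intro v
          have := (same v).not.mpr (by simp [h0])
          cases h' : c v with
          | inl t => simp [h'] at this
          | inr t => exact ⟨t, rfl⟩
        choose c₂ hc₂ using hr
        have hcc : c = Sum.inr ∘ c₂ := funext fun v => hc₂ v
        refine ⟨c₂, ?_, ?_⟩
        · intro v i hm
          apply hc v (Sum.inr (Sum.inl i))
          intro u hu
          rw [hc₂ (v + u)]
          show Sum.inr (c₂ (v + u)) = Sum.inr (τ₂.pat i u)
          rw [hm u hu]
        · rw [hcc] at he
          exact (isEigen_comp τ₂ (union τ₁ τ₂) Sum.inr Sum.inr_injective c₂ q).mp he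
  · rintro (⟨c₁, hv, he⟩ | ⟨c₂, hv, he⟩)
    · refine ⟨Sum.inl ∘ c₁, ?_, (isEigen_comp τ₁ (union τ₁ τ₂) Sum.inl Sum.inl_injective c₁ q).mpr he⟩
      rintro v (i | i | ⟨i, t₁, t₂, b⟩) hm
      · apply hv v i
        intro u hu
        have := hm u hu
        exact Sum.inl_injective this
      · obtain ⟨u, hu⟩ := h2 i
        have := hm u hu
        simp at this
        exact Sum.inl_ne_inr this
      · cases b with
        | true =>
            have := hm (evec i) (by simp)
            simp [evec_ne_zero i] at this
            exact Sum.inl_ne_inr this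
        | false =>
            have := hm 0 (by simp)
            simp at this
            exact Sum.inl_ne_inr this
    · refine ⟨Sum.inr ∘ c₂, ?_, (isEigen_comp τ₂ (union τ₁ τ₂) Sum.inr Sum.inr_injective c₂ q).mpr he⟩
      rintro v (i | i | ⟨i, t₁, t₂, b⟩) hm
      · obtain ⟨u, hu⟩ := h1 i
        have := hm u hu
        simp at this
        exact Sum.inr_ne_inl this
      · apply hv v i
        intro u hu
        have := hm u hu
        exact Sum.inr_injective this
      · cases b with
        | true =>
            have := hm 0 (by simp)
            simp at this
            exact Sum.inr_ne_inl this
        | false =>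
            have := hm (evec i) (by simp)
            simp [evec_ne_zero i] at this
            exact Sum.inr_ne_inl this

end TilingUnion

/-- The class of sets of (total) eigenperiods in dimension `d` is closed under union. -/
theorem Lt_closed_under_union {d : ℕ} (hd : 1 ≤ d) (τ₁ τ₂ : TilingSystem d) :
    ∃ τ : TilingSystem d, τ.Lt = τ₁.Lt ∪ τ₂.Lt := by
  by_cases h1 : ∀ i, (τ₁.nbhd i).Nonempty
  · by_cases h2 : ∀ i, (τ₂.nbhd i).Nonempty
    · exact ⟨TilingUnion.union τ₁ τ₂, TilingUnion.main τ₁ τ₂ h1 h2⟩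
    · push_neg at h2
      obtain ⟨i, hi⟩ := h2
      refine ⟨τ₁, ?_⟩
      rw [TilingUnion.Lt_eq_empty τ₂ ⟨i, hi⟩, Set.union_empty]
  · push_neg at h1
    obtain ⟨i, hi⟩ := h1
    refine ⟨τ₂, ?_⟩
    rw [TilingUnion.Lt_eq_empty τ₁ ⟨i, hi⟩, Set.empty_union]
end

section
/- Let τ = (T, I) be a tiling system in dimension 2 whose forbidden patterns all have neighborhoods contained in the square {0, …, r−1} × {0, …, r−1} for some r ≥ 1. If τ admits a valid tiling with horizontal period n, then τ admits a valid tiling c that has horizontal period n and also a vertical period q with 1 ≤ q ≤ |T|^(r·n), i.e., c(x, y + q) = c(x, y) for all x, y ∈ ℤ. -/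
/-- `q` is a vertical period of `c`: `q > 0` and `c (x, y + q) = c (x, y)` for all `x, y`. -/
def TilingSystem2.IsVertPeriod (τ : TilingSystem2) (c : ℤ × ℤ → τ.T) (q : ℕ) : Prop :=
  0 < q ∧ ∀ x y : ℤ, c (x, y + (q : ℤ)) = c (x, y)

/-- If all forbidden patterns of `τ` have neighborhoods contained in the square
`{0, …, r−1} × {0, …, r−1}` and `τ` admits a valid tiling with horizontal period `n`,
then `τ` admits a valid tiling with horizontal period `n` that moreover has a vertical
period `q` with `1 ≤ q ≤ |T|^(r·n)`. -/
theorem horiz_periodic_tiling_has_bounded_vert_period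
    (τ : TilingSystem2) (r : ℕ) (hr : 1 ≤ r)
    (hsquare : ∀ i : τ.ι, ∀ u ∈ τ.nbhd i,
      0 ≤ u.1 ∧ u.1 < (r : ℤ) ∧ 0 ≤ u.2 ∧ u.2 < (r : ℤ))
    (n : ℕ)
    (hexists : ∃ c : ℤ × ℤ → τ.T, τ.IsValid c ∧ τ.IsHorizPeriod c n) :
    ∃ c : ℤ × ℤ → τ.T, ∃ q : ℕ, τ.IsValid c ∧ τ.IsHorizPeriod c n ∧
      τ.IsVertPeriod c q ∧ q ≤ (@Fintype.card τ.T τ.fintypeT) ^ (r * n) := by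
  classical
  obtain ⟨c, hvalid, hn, hper⟩ := hexists
  letI : Fintype τ.T := τ.fintypeT
  set M := (Fintype.card τ.T) ^ (r * n) with hM
  have hn' : (0:ℤ) < n := by exact_mod_cast hn
  -- full horizontal periodicity
  have hperk : ∀ (k : ℤ) (x y : ℤ), c (x + k * n, y) = c (x, y) := by
    intro k
    induction k using Int.induction_on with
    | zero => intro x y; simp
    | succ k ih =>
      intro x y
      have h1 : x + ((k:ℤ)+1) * n = (x + k * n) + n := by ring
      rw [h1, hper, ih]
    | pred k ih =>
      intro x y
      have h1 : (x + (-(k:ℤ)-1) * n) + n = x + (-(k:ℤ)) * n := by ring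
      have := hper (x + (-(k:ℤ)-1) * n) y
      rw [h1] at this
      rw [← this, ih]
  have hmod : ∀ x y : ℤ, c (x, y) = c (x % n, y) := by
    intro x y
    have h1 : x = x % n + (x / n) * n := by
      rw [mul_comm]; exact (Int.emod_add_mul_ediv x n).symm
    conv_lhs => rw [h1]
    rw [hperk]
  -- pigeonhole
  set F : ℕ → (Fin n × Fin r → τ.T) := fun y p => c ((p.1 : ℤ), (y : ℤ) + (p.2 : ℤ)) with hF
  have hcardF : Fintype.card (Fin n × Fin r → τ.T) = M := by
    simp [hM, Fintype.card_fun, ← pow_mul, mul_comm]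
  obtain ⟨a, ha, b, hb, hab, hFab⟩ :=
    Finset.exists_ne_map_eq_of_card_lt_of_maps_to (s := Finset.range (M+1))
      (t := (Finset.univ : Finset (Fin n × Fin r → τ.T)))
      (by simp [Finset.card_univ, hcardF]) (fun x _ => Finset.mem_univ (F x))
  -- wlog a < b
  obtain ⟨y1, y2, hy12, hy2M, hFeq⟩ :
      ∃ y1 y2 : ℕ, y1 < y2 ∧ y2 ≤ M ∧ F y1 = F y2 := by
    rcases lt_or_gt_of_ne hab with h | h
    · exact ⟨a, b, h, by simpa using Nat.lt_succ_iff.mp (Finset.mem_range.mp hb), hFab⟩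
    · exact ⟨b, a, h, by simpa using Nat.lt_succ_iff.mp (Finset.mem_range.mp ha), hFab.symm⟩
  set q : ℕ := y2 - y1 with hqdef
  have hq0 : 0 < q := by omega
  have hq0' : (0:ℤ) < q := by exact_mod_cast hq0
  -- row equality
  have hrow : ∀ x j : ℤ, 0 ≤ j → j < r → c (x, (y1:ℤ) + j) = c (x, (y2:ℤ) + j) := by
    intro x j hj0 hjr
    have hxm : (0:ℤ) ≤ x % n := Int.emod_nonneg x (by omega)
    have hxlt : x % n < n := Int.emod_lt_of_pos x hn'
    have hi : (x % n).toNat < n := by omega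
    have hj : j.toNat < r := by omega
    have key := congrFun hFeq (⟨(x % n).toNat, hi⟩, ⟨j.toNat, hj⟩)
    simp only [hF] at key
    rw [hmod x ((y1:ℤ)+j), hmod x ((y2:ℤ)+j)]
    have e1 : (((x % n).toNat : ℕ) : ℤ) = x % n := Int.toNat_of_nonneg hxm
    have e2 : ((j.toNat : ℕ) : ℤ) = j := Int.toNat_of_nonneg hj0
    rw [e1, e2] at key
    exact key
  -- key wrap lemma
  have hwrap : ∀ (x : ℤ) (t : ℕ), t < q + r →
      c (x, (y1:ℤ) + ((t % q : ℕ) : ℤ)) = c (x, (y1:ℤ) + (t : ℤ)) := by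
    intro x t
    induction t using Nat.strong_induction_on with
    | _ t ih =>
      intro ht
      by_cases h : t < q
      · rw [Nat.mod_eq_of_lt h]
      · have h1 : t - q < t := by omega
        have h2 : t % q = (t - q) % q := by
          conv_lhs => rw [show t = (t - q) + q by omega]
          simp [Nat.add_mod_right]
        rw [h2, ih (t - q) h1 (by omega)]
        have h3 : c (x, (y1:ℤ) + ((t - q : ℕ) : ℤ)) = c (x, (y2:ℤ) + ((t - q : ℕ) : ℤ)) :=
          hrow x _ (by positivity) (by push_cast; omega)
        rw [h3]
        have h4 : (y2:ℤ) + ((t - q : ℕ) : ℤ) = (y1:ℤ) + (t : ℤ) := by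
          push_cast; omega
        rw [h4]
  -- the new tiling
  set c' : ℤ × ℤ → τ.T := fun p => c (p.1, (y1:ℤ) + (p.2 - (y1:ℤ)) % q) with hc'
  -- key block identity
  have hkey : ∀ (x b : ℤ) (j : ℤ), 0 ≤ j → j < r →
      c' (x, b + j) = c (x, (y1:ℤ) + (b - (y1:ℤ)) % q + j) := by
    intro x b j hj0 hjr
    set m : ℤ := (b - (y1:ℤ)) % q with hm
    have hm0 : 0 ≤ m := Int.emod_nonneg _ (by omega)
    have hmq : m < q := Int.emod_lt_of_pos _ hq0'
    have hmod1 : (b + j - (y1:ℤ)) % q = (m + j) % q := by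
      rw [show b + j - (y1:ℤ) = (b - (y1:ℤ)) + j by ring]
      rw [Int.add_emod, hm.symm, Int.add_emod m j]
      rw [Int.emod_emod_of_dvd _ dvd_rfl]
    set t : ℕ := m.toNat + j.toNat with htdef
    have htm : (t : ℤ) = m + j := by omega
    have htlt : t < q + r := by omega
    have := hwrap x t htlt
    have hcast : ((t % q : ℕ) : ℤ) = (m + j) % q := by
      push_cast [htm]
      try rfl
    simp only [hc']
    rw [hmod1, ← hcast]
    rw [show ((t % q : ℕ) : ℤ) = ((t % q : ℕ) : ℤ) from rfl]
    calc c (x, (y1:ℤ) + ((t % q : ℕ) : ℤ)) = c (x, (y1:ℤ) + (t:ℤ)) := this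
      _ = c (x, (y1:ℤ) + m + j) := by rw [htm]; ring_nf
  refine ⟨c', q, ?_, ⟨hn, ?_⟩, ⟨hq0, ?_⟩, ?_⟩
  · -- validity
    intro v i hpat
    apply hvalid (v.1, (y1:ℤ) + (v.2 - (y1:ℤ)) % q) i
    intro u hu
    obtain ⟨hu1, hu2, hu3, hu4⟩ := hsquare i u hu
    have := hpat u hu
    have hk := hkey (v.1 + u.1) v.2 u.2 hu3 hu4
    have hv : v + u = (v.1 + u.1, v.2 + u.2) := rfl
    rw [hv] at this
    rw [hk] at this
    exact this
  · -- horizontal period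
    intro x y
    simp only [hc']
    rw [hper]
  · -- vertical period
    intro x y
    simp only [hc']
    have : (y + (q:ℤ) - (y1:ℤ)) % q = (y - (y1:ℤ)) % q := by
      rw [show y + (q:ℤ) - (y1:ℤ) = (y - (y1:ℤ)) + 1 * q by ring]
      exact Int.add_mul_emod_self_right _ _ _
    rw [this]
  · omega
end
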